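/- Suppose Φ is 𝒟-pullback asymptotically compact in X. Then for every D ∈ 𝒟, the Ω-limit set family Ω(D) = {Ω(D,ω₁,ω₂) : ω₁ ∈ Ω₁, ω₂ ∈ Ω₂} is quasi-invariant under Φ. -/
import Mathlib


open MeasureTheory Filter Set Topology
open scoped ENNReal

namespace RDS

/-- A group of transformations of `α` parametrized by `ℝ`. -/
def IsGroupAction {α : Type*} (θ : ℝ → α → α) : Prop :=
  (∀ a, θ 0 a = a) ∧ ∀ s t : ℝ, ∀ a, θ (s + t) a = θ t (θ s a)

variable {Ω₁ Ω₂ X : Type*} [MetricSpace X] [MeasurableSpace X] [MeasurableSpace Ω₂]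

/-- A continuous cocycle on `X` over the parametric dynamical systems
`(Ω₁, θ₁)` and `(Ω₂, ℱ₂, P, θ₂)` (Definition 2.1). -/
structure IsCocycle (θ₁ : ℝ → Ω₁ → Ω₁) (θ₂ : ℝ → Ω₂ → Ω₂)
    (Φ : ℝ → Ω₁ → Ω₂ → X → X) : Prop where
  measurable : ∀ ω₁ : Ω₁,
    Measurable fun p : {t : ℝ // 0 ≤ t} × Ω₂ × X => Φ p.1.1 ω₁ p.2.1 p.2.2
  map_zero : ∀ (ω₁ : Ω₁) (ω₂ : Ω₂) (x : X), Φ 0 ω₁ ω₂ x = x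
  cocycle : ∀ t τ : ℝ, 0 ≤ t → 0 ≤ τ → ∀ (ω₁ : Ω₁) (ω₂ : Ω₂) (x : X),
    Φ (t + τ) ω₁ ω₂ x = Φ t (θ₁ τ ω₁) (θ₂ τ ω₂) (Φ τ ω₁ ω₂ x)
  continuous : ∀ t : ℝ, 0 ≤ t → ∀ (ω₁ : Ω₁) (ω₂ : Ω₂),
    Continuous fun x : X => Φ t ω₁ ω₂ x

/-- A complete orbit of the cocycle `Φ` (Definition 2.9). -/
def IsCompleteOrbit (θ₁ : ℝ → Ω₁ → Ω₁) (θ₂ : ℝ → Ω₂ → Ω₂)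
    (Φ : ℝ → Ω₁ → Ω₂ → X → X) (ψ : ℝ → Ω₁ → Ω₂ → X) : Prop :=
  ∀ t τ : ℝ, 0 ≤ t → ∀ (ω₁ : Ω₁) (ω₂ : Ω₂),
    Φ t (θ₁ τ ω₁) (θ₂ τ ω₂) (ψ τ ω₁ ω₂) = ψ (t + τ) ω₁ ω₂

/-- A `𝒟`-complete orbit of `Φ`. -/
def IsDCompleteOrbit (θ₁ : ℝ → Ω₁ → Ω₁) (θ₂ : ℝ → Ω₂ → Ω₂)
    (Φ : ℝ → Ω₁ → Ω₂ → X → X) (𝒟 : Set (Ω₁ → Ω₂ → Set X))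
    (ψ : ℝ → Ω₁ → Ω₂ → X) : Prop :=
  IsCompleteOrbit θ₁ θ₂ Φ ψ ∧
    ∃ D ∈ 𝒟, ∀ (t : ℝ) (ω₁ : Ω₁) (ω₂ : Ω₂), ψ t ω₁ ω₂ ∈ D (θ₁ t ω₁) (θ₂ t ω₂)

/-- Positive invariance of a family under `Φ`. -/
def PositivelyInvariant (θ₁ : ℝ → Ω₁ → Ω₁) (θ₂ : ℝ → Ω₂ → Ω₂)
    (Φ : ℝ → Ω₁ → Ω₂ → X → X) (B : Ω₁ → Ω₂ → Set X) : Prop :=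
  ∀ t : ℝ, 0 ≤ t → ∀ (ω₁ : Ω₁) (ω₂ : Ω₂),
    Φ t ω₁ ω₂ '' B ω₁ ω₂ ⊆ B (θ₁ t ω₁) (θ₂ t ω₂)

/-- Invariance of a family under `Φ`. -/
def Invariant (θ₁ : ℝ → Ω₁ → Ω₁) (θ₂ : ℝ → Ω₂ → Ω₂)
    (Φ : ℝ → Ω₁ → Ω₂ → X → X) (B : Ω₁ → Ω₂ → Set X) : Prop :=
  ∀ t : ℝ, 0 ≤ t → ∀ (ω₁ : Ω₁) (ω₂ : Ω₂),
    Φ t ω₁ ω₂ '' B ω₁ ω₂ = B (θ₁ t ω₁) (θ₂ t ω₂)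

/-- Quasi-invariance of a family under `Φ`. -/
def QuasiInvariant (θ₁ : ℝ → Ω₁ → Ω₁) (θ₂ : ℝ → Ω₂ → Ω₂)
    (Φ : ℝ → Ω₁ → Ω₂ → X → X) (B : Ω₁ → Ω₂ → Set X) : Prop :=
  ∀ y : Ω₁ → Ω₂ → X, (∀ (ω₁ : Ω₁) (ω₂ : Ω₂), y ω₁ ω₂ ∈ B ω₁ ω₂) →
    ∃ ψ : ℝ → Ω₁ → Ω₂ → X, IsCompleteOrbit θ₁ θ₂ Φ ψ ∧
      (∀ (ω₁ : Ω₁) (ω₂ : Ω₂), ψ 0 ω₁ ω₂ = y ω₁ ω₂) ∧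
      ∀ (t : ℝ) (ω₁ : Ω₁) (ω₂ : Ω₂), ψ t ω₁ ω₂ ∈ B (θ₁ t ω₁) (θ₂ t ω₂)

/-- The Ω-limit set of a family `B` (Definition 2.13). -/
def omegaLimit (θ₁ : ℝ → Ω₁ → Ω₁) (θ₂ : ℝ → Ω₂ → Ω₂)
    (Φ : ℝ → Ω₁ → Ω₂ → X → X) (B : Ω₁ → Ω₂ → Set X) (ω₁ : Ω₁) (ω₂ : Ω₂) : Set X :=
  ⋂ τ ∈ Ici (0 : ℝ), closure (⋃ t ∈ Ici τ,
    Φ t (θ₁ (-t) ω₁) (θ₂ (-t) ω₂) '' B (θ₁ (-t) ω₁) (θ₂ (-t) ω₂))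

/-- `𝒟` is a collection of families of nonempty subsets of `X`. -/
def FamiliesOfNonemptySets (𝒟 : Set (Ω₁ → Ω₂ → Set X)) : Prop :=
  ∀ D ∈ 𝒟, ∀ (ω₁ : Ω₁) (ω₂ : Ω₂), (D ω₁ ω₂).Nonempty

/-- Neighborhood closedness of the collection `𝒟` (Definition 2.5). -/
def NeighborhoodClosed (𝒟 : Set (Ω₁ → Ω₂ → Set X)) : Prop :=
  ∀ D ∈ 𝒟, ∃ ε : ℝ, 0 < ε ∧ ∀ B : Ω₁ → Ω₂ → Set X,
    (∀ (ω₁ : Ω₁) (ω₂ : Ω₂), (B ω₁ ω₂).Nonempty ∧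
      B ω₁ ω₂ ⊆ Metric.thickening ε (D ω₁ ω₂)) → B ∈ 𝒟

/-- Inclusion closedness of the collection `𝒟`. -/
def InclusionClosed (𝒟 : Set (Ω₁ → Ω₂ → Set X)) : Prop :=
  ∀ D ∈ 𝒟, ∀ B : Ω₁ → Ω₂ → Set X,
    (∀ (ω₁ : Ω₁) (ω₂ : Ω₂), (B ω₁ ω₂).Nonempty ∧ B ω₁ ω₂ ⊆ D ω₁ ω₂) → B ∈ 𝒟

/-- `𝒟`-pullback asymptotic compactness of `Φ` (Definition 2.16). -/
def AsymptoticallyCompact (θ₁ : ℝ → Ω₁ → Ω₁) (θ₂ : ℝ → Ω₂ → Ω₂)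
    (Φ : ℝ → Ω₁ → Ω₂ → X → X) (𝒟 : Set (Ω₁ → Ω₂ → Set X)) : Prop :=
  ∀ (ω₁ : Ω₁) (ω₂ : Ω₂), ∀ B ∈ 𝒟, ∀ (t : ℕ → ℝ) (x : ℕ → X),
    Tendsto t atTop atTop →
    (∀ n, x n ∈ B (θ₁ (-t n) ω₁) (θ₂ (-t n) ω₂)) →
    ∃ (φ : ℕ → ℕ) (y : X), StrictMono φ ∧
      Tendsto (fun n => Φ (t (φ n)) (θ₁ (-t (φ n)) ω₁) (θ₂ (-t (φ n)) ω₂) (x (φ n)))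
        atTop (𝓝 y)

/-- The Hausdorff semi-metric `d(C,B) = sup_{x ∈ C} inf_{b ∈ B} d(x,b)`,
valued in `ℝ≥0∞`. -/
noncomputable def hausSemidist (C B : Set X) : ℝ≥0∞ :=
  ⨆ x ∈ C, EMetric.infEdist x B

/-- The family `A` pullback attracts the family `B` under `Φ`. -/
def Attracts (θ₁ : ℝ → Ω₁ → Ω₁) (θ₂ : ℝ → Ω₂ → Ω₂)
    (Φ : ℝ → Ω₁ → Ω₂ → X → X) (B A : Ω₁ → Ω₂ → Set X) : Prop :=
  ∀ (ω₁ : Ω₁) (ω₂ : Ω₂),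
    Tendsto (fun t : ℝ => hausSemidist
        (Φ t (θ₁ (-t) ω₁) (θ₂ (-t) ω₂) '' B (θ₁ (-t) ω₁) (θ₂ (-t) ω₂)) (A ω₁ ω₂))
      atTop (𝓝 0)

/-- A `𝒟`-pullback absorbing set for `Φ` (Definition 2.15). -/
def IsAbsorbingSet (θ₁ : ℝ → Ω₁ → Ω₁) (θ₂ : ℝ → Ω₂ → Ω₂)
    (Φ : ℝ → Ω₁ → Ω₂ → X → X) (𝒟 : Set (Ω₁ → Ω₂ → Set X))
    (K : Ω₁ → Ω₂ → Set X) : Prop :=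
  K ∈ 𝒟 ∧ ∀ (ω₁ : Ω₁) (ω₂ : Ω₂), ∀ B ∈ 𝒟, ∃ T : ℝ, 0 < T ∧ ∀ t : ℝ, T ≤ t →
    Φ t (θ₁ (-t) ω₁) (θ₂ (-t) ω₂) '' B (θ₁ (-t) ω₁) (θ₂ (-t) ω₂) ⊆ K ω₁ ω₂

/-- A closed measurable (w.r.t. the `P`-completion of `ℱ₂`) `𝒟`-pullback
absorbing set for `Φ`. -/
def IsClosedMeasurableAbsorbingSet (θ₁ : ℝ → Ω₁ → Ω₁) (θ₂ : ℝ → Ω₂ → Ω₂)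
    (Φ : ℝ → Ω₁ → Ω₂ → X → X) (P : Measure Ω₂) (𝒟 : Set (Ω₁ → Ω₂ → Set X))
    (K : Ω₁ → Ω₂ → Set X) : Prop :=
  IsAbsorbingSet θ₁ θ₂ Φ 𝒟 K ∧
    (∀ (ω₁ : Ω₁) (ω₂ : Ω₂), IsClosed (K ω₁ ω₂) ∧ (K ω₁ ω₂).Nonempty) ∧
    ∀ (ω₁ : Ω₁) (x : X), NullMeasurable (fun ω₂ => Metric.infDist x (K ω₁ ω₂)) P

/-- A `𝒟`-pullback attractor for `Φ` (Definition 2.17). -/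
structure IsPullbackAttractor (θ₁ : ℝ → Ω₁ → Ω₁) (θ₂ : ℝ → Ω₂ → Ω₂)
    (Φ : ℝ → Ω₁ → Ω₂ → X → X) (P : Measure Ω₂) (𝒟 : Set (Ω₁ → Ω₂ → Set X))
    (A : Ω₁ → Ω₂ → Set X) : Prop where
  mem : A ∈ 𝒟
  compact : ∀ (ω₁ : Ω₁) (ω₂ : Ω₂), IsCompact (A ω₁ ω₂)
  measurable : ∀ (ω₁ : Ω₁) (x : X),
    NullMeasurable (fun ω₂ => Metric.infDist x (A ω₁ ω₂)) P
  invariant : Invariant θ₁ θ₂ Φ A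
  attracts : ∀ B ∈ 𝒟, Attracts θ₁ θ₂ Φ B A

section Aux

variable (θ₁ : ℝ → Ω₁ → Ω₁) (θ₂ : ℝ → Ω₂ → Ω₂) (Φ : ℝ → Ω₁ → Ω₂ → X → X)
  (D : Ω₁ → Ω₂ → Set X)

lemma mem_omegaLimit_of_seq {ω₁ : Ω₁} {ω₂ : Ω₂} {y : X} (t : ℕ → ℝ) (x : ℕ → X)
    (ht : Tendsto t atTop atTop)
    (hx : ∀ n, x n ∈ D (θ₁ (-t n) ω₁) (θ₂ (-t n) ω₂))
    (hlim : Tendsto (fun n => Φ (t n) (θ₁ (-t n) ω₁) (θ₂ (-t n) ω₂) (x n)) atTop (𝓝 y)) :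
    y ∈ omegaLimit θ₁ θ₂ Φ D ω₁ ω₂ := by
  refine mem_iInter₂.2 fun τ hτ => ?_
  refine mem_closure_of_tendsto hlim ?_
  filter_upwards [ht.eventually_ge_atTop τ] with n hn
  exact mem_biUnion hn ⟨x n, hx n, rfl⟩

lemma exists_seq_of_mem_omegaLimit {ω₁ : Ω₁} {ω₂ : Ω₂} {y : X}
    (hy : y ∈ omegaLimit θ₁ θ₂ Φ D ω₁ ω₂) :
    ∃ (t : ℕ → ℝ) (x : ℕ → X), Tendsto t atTop atTop ∧
      (∀ n, x n ∈ D (θ₁ (-t n) ω₁) (θ₂ (-t n) ω₂)) ∧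
      Tendsto (fun n => Φ (t n) (θ₁ (-t n) ω₁) (θ₂ (-t n) ω₂) (x n)) atTop (𝓝 y) := by
  have key : ∀ n : ℕ, ∃ (s : ℝ) (p : X), (n : ℝ) ≤ s ∧
      p ∈ D (θ₁ (-s) ω₁) (θ₂ (-s) ω₂) ∧
      dist (Φ s (θ₁ (-s) ω₁) (θ₂ (-s) ω₂) p) y < 1 / (n + 1) := by
    intro n
    have h1 : y ∈ closure (⋃ t ∈ Ici (n : ℝ), Φ t (θ₁ (-t) ω₁) (θ₂ (-t) ω₂) ''
        D (θ₁ (-t) ω₁) (θ₂ (-t) ω₂)) := mem_iInter₂.1 hy n (mem_Ici.2 (by positivity))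
    have hpos : (0 : ℝ) < 1 / (n + 1) := by positivity
    obtain ⟨p, hp, hd⟩ := Metric.mem_closure_iff.1 h1 _ hpos
    simp only [mem_iUnion, mem_image, mem_Ici] at hp
    obtain ⟨s, hs, q, hq, rfl⟩ := hp
    exact ⟨s, q, hs, hq, by rwa [dist_comm]⟩
  choose t x h1 h2 h3 using key
  refine ⟨t, x, tendsto_atTop_mono h1 tendsto_natCast_atTop_atTop, h2, ?_⟩
  exact tendsto_iff_dist_tendsto_zero.2 (squeeze_zero (fun n => dist_nonneg)
    (fun n => (h3 n).le) tendsto_one_div_add_atTop_nhds_zero_nat)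

lemma exists_orbit (hθ₁ : IsGroupAction θ₁) (hθ₂ : IsGroupAction θ₂)
    (hΦ : IsCocycle θ₁ θ₂ Φ) {𝒟 : Set (Ω₁ → Ω₂ → Set X)}
    (hac : AsymptoticallyCompact θ₁ θ₂ Φ 𝒟) (hD : D ∈ 𝒟)
    {ω₁ : Ω₁} {ω₂ : Ω₂} {y : X} (hy : y ∈ omegaLimit θ₁ θ₂ Φ D ω₁ ω₂) :
    ∃ ψ : ℝ → X, (∀ t τ : ℝ, 0 ≤ t → Φ t (θ₁ τ ω₁) (θ₂ τ ω₂) (ψ τ) = ψ (t + τ)) ∧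
      ψ 0 = y ∧ ∀ s : ℝ, ψ s ∈ omegaLimit θ₁ θ₂ Φ D (θ₁ s ω₁) (θ₂ s ω₂) := by
  obtain ⟨t, x, ht, hx, hlim⟩ := exists_seq_of_mem_omegaLimit θ₁ θ₂ Φ D hy
  have hg₁ : ∀ a b : ℝ, θ₁ b (θ₁ a ω₁) = θ₁ (a + b) ω₁ := fun a b => (hθ₁.2 a b ω₁).symm
  have hg₂ : ∀ a b : ℝ, θ₂ b (θ₂ a ω₂) = θ₂ (a + b) ω₂ := fun a b => (hθ₂.2 a b ω₂).symm
  set Q : ℕ → (ℕ → ℕ) → X → Prop := fun k ρ z => StrictMono ρ ∧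
    Tendsto (fun n => Φ (t (ρ n) - k) (θ₁ (-t (ρ n)) ω₁) (θ₂ (-t (ρ n)) ω₂) (x (ρ n)))
      atTop (𝓝 z) with hQdef
  have base : Q 0 id y := ⟨strictMono_id, by simpa using hlim⟩
  have step : ∀ (k : ℕ) (ρ : ℕ → ℕ) (z : X), Q k ρ z → ∃ (ρ' : ℕ → ℕ) (z' : X),
      Q (k + 1) ρ' z' ∧ Φ 1 (θ₁ (-((k : ℝ) + 1)) ω₁) (θ₂ (-((k : ℝ) + 1)) ω₂) z' = z := by
    rintro k ρ z ⟨hρ, hz⟩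
    have hts : Tendsto (fun n => t (ρ n) + -((k : ℝ) + 1)) atTop atTop :=
      tendsto_atTop_add_const_right atTop _ (ht.comp hρ.tendsto_atTop)
    have hmem : ∀ n, x (ρ n) ∈
        D (θ₁ (-(t (ρ n) + -((k : ℝ) + 1))) (θ₁ (-((k : ℝ) + 1)) ω₁))
          (θ₂ (-(t (ρ n) + -((k : ℝ) + 1))) (θ₂ (-((k : ℝ) + 1)) ω₂)) := by
      intro n
      rw [hg₁, hg₂, show -((k : ℝ) + 1) + -(t (ρ n) + -((k : ℝ) + 1)) = -t (ρ n) by ring]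
      exact hx (ρ n)
    obtain ⟨φ, z', hφ, hz'⟩ := hac (θ₁ (-((k : ℝ) + 1)) ω₁) (θ₂ (-((k : ℝ) + 1)) ω₂) D hD
      (fun n => t (ρ n) + -((k : ℝ) + 1)) (fun n => x (ρ n)) hts hmem
    have hbase : ∀ n : ℕ,
        θ₁ (-(t (ρ n) + -((k : ℝ) + 1))) (θ₁ (-((k : ℝ) + 1)) ω₁) = θ₁ (-t (ρ n)) ω₁ ∧
        θ₂ (-(t (ρ n) + -((k : ℝ) + 1))) (θ₂ (-((k : ℝ) + 1)) ω₂) = θ₂ (-t (ρ n)) ω₂ := by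
      intro n
      rw [hg₁, hg₂, show -((k : ℝ) + 1) + -(t (ρ n) + -((k : ℝ) + 1)) = -t (ρ n) by ring]
      exact ⟨rfl, rfl⟩
    have hz'' : Tendsto (fun n => Φ (t (ρ (φ n)) - ((k : ℝ) + 1))
        (θ₁ (-t (ρ (φ n))) ω₁) (θ₂ (-t (ρ (φ n))) ω₂) (x (ρ (φ n)))) atTop (𝓝 z') := by
      refine hz'.congr fun n => ?_
      rw [(hbase (φ n)).1, (hbase (φ n)).2, sub_eq_add_neg]
    refine ⟨ρ ∘ φ, z', ⟨hρ.comp hφ, ?_⟩, ?_⟩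
    · simp only [hQdef, Function.comp_apply, Nat.cast_add, Nat.cast_one]
      exact hz''
    · -- link with level k
      have hev : (fun n => Φ 1 (θ₁ (-((k : ℝ) + 1)) ω₁) (θ₂ (-((k : ℝ) + 1)) ω₂)
            (Φ (t (ρ (φ n)) - ((k : ℝ) + 1)) (θ₁ (-t (ρ (φ n))) ω₁)
              (θ₂ (-t (ρ (φ n))) ω₂) (x (ρ (φ n))))) =ᶠ[atTop]
          (fun n => Φ (t (ρ (φ n)) - (k : ℝ)) (θ₁ (-t (ρ (φ n))) ω₁)
            (θ₂ (-t (ρ (φ n))) ω₂) (x (ρ (φ n)))) := by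
        have htail : ∀ᶠ n in atTop, (k : ℝ) + 1 ≤ t (ρ (φ n)) :=
          ((ht.comp hρ.tendsto_atTop).comp hφ.tendsto_atTop).eventually_ge_atTop _
        filter_upwards [htail] with n hn
        have e1 : t (ρ (φ n)) - (k : ℝ) = 1 + (t (ρ (φ n)) - ((k : ℝ) + 1)) := by ring
        rw [e1, hΦ.cocycle 1 (t (ρ (φ n)) - ((k : ℝ) + 1)) zero_le_one (by linarith),
          hg₁, hg₂, show -t (ρ (φ n)) + (t (ρ (φ n)) - ((k : ℝ) + 1)) = -((k : ℝ) + 1)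
            by ring]
      have h2 : Tendsto (fun n => Φ (t (ρ (φ n)) - (k : ℝ)) (θ₁ (-t (ρ (φ n))) ω₁)
          (θ₂ (-t (ρ (φ n))) ω₂) (x (ρ (φ n)))) atTop
          (𝓝 (Φ 1 (θ₁ (-((k : ℝ) + 1)) ω₁) (θ₂ (-((k : ℝ) + 1)) ω₂) z')) :=
        Tendsto.congr' hev (((hΦ.continuous 1 zero_le_one _ _).tendsto z').comp hz'')
      exact tendsto_nhds_unique h2 (hz.comp hφ.tendsto_atTop)
  choose ρ' z' hQ' hlink using step
  let g : ∀ k : ℕ, {p : (ℕ → ℕ) × X // Q k p.1 p.2} := fun k =>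
    Nat.rec ⟨(id, y), base⟩
      (fun k p => ⟨(ρ' k p.1.1 p.1.2 p.2, z' k p.1.1 p.1.2 p.2), hQ' k p.1.1 p.1.2 p.2⟩) k
  set z : ℕ → X := fun k => (g k).1.2 with hzdef
  have hz0 : z 0 = y := rfl
  have hQk : ∀ k, Q k (g k).1.1 (z k) := fun k => (g k).2
  have hlinkk : ∀ k : ℕ,
      Φ 1 (θ₁ (-((k : ℝ) + 1)) ω₁) (θ₂ (-((k : ℝ) + 1)) ω₂) (z (k + 1)) = z k :=
    fun k => hlink k (g k).1.1 (g k).1.2 (g k).2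
  have chain : ∀ (j k : ℕ),
      Φ (j : ℝ) (θ₁ (-((k : ℝ) + j)) ω₁) (θ₂ (-((k : ℝ) + j)) ω₂) (z (k + j)) = z k := by
    intro j
    induction j with
    | zero =>
      intro k
      simp only [Nat.cast_zero, add_zero, Nat.add_zero]
      exact hΦ.map_zero _ _ _
    | succ j ih =>
      intro k
      have e1 : ((j + 1 : ℕ) : ℝ) = (j : ℝ) + 1 := by push_cast; ring
      rw [e1, hΦ.cocycle (j : ℝ) 1 (by positivity) zero_le_one, hg₁, hg₂]
      have e3 : -((k : ℝ) + ((j : ℝ) + 1)) = -(((k + j : ℕ) : ℝ) + 1) := by push_cast; ring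
      rw [show k + (j + 1) = (k + j) + 1 by omega, e3, hlinkk (k + j)]
      have e4 : -(((k + j : ℕ) : ℝ) + 1) + 1 = -((k : ℝ) + j) := by push_cast; ring
      rw [e4]
      exact ih k
  have hwd : ∀ (k m : ℕ), k ≤ m → ∀ s : ℝ, -s ≤ (k : ℝ) →
      Φ (s + m) (θ₁ (-(m : ℝ)) ω₁) (θ₂ (-(m : ℝ)) ω₂) (z m) =
      Φ (s + k) (θ₁ (-(k : ℝ)) ω₁) (θ₂ (-(k : ℝ)) ω₂) (z k) := by
    intro k m hkm s hs
    obtain ⟨j, rfl⟩ := Nat.exists_eq_add_of_le hkm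
    have e1 : s + ((k + j : ℕ) : ℝ) = (s + k) + (j : ℝ) := by push_cast; ring
    rw [e1, hΦ.cocycle (s + k) (j : ℝ) (by linarith) (by positivity), hg₁, hg₂,
      show -((k + j : ℕ) : ℝ) + (j : ℝ) = -(k : ℝ) by push_cast; ring]
    congr 1
    have := chain j k
    rw [show -((k : ℝ) + (j : ℝ)) = -((k + j : ℕ) : ℝ) by push_cast; ring] at this
    exact this
  set ψ : ℝ → X := fun s => Φ (s + ⌈-s⌉₊) (θ₁ (-(⌈-s⌉₊ : ℝ)) ω₁)
    (θ₂ (-(⌈-s⌉₊ : ℝ)) ω₂) (z ⌈-s⌉₊) with hψdef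
  have hψeq : ∀ (s : ℝ) (k : ℕ), -s ≤ (k : ℝ) →
      ψ s = Φ (s + k) (θ₁ (-(k : ℝ)) ω₁) (θ₂ (-(k : ℝ)) ω₂) (z k) := by
    intro s k hk
    rcases le_total (⌈-s⌉₊) k with h | h
    · exact (hwd _ _ h s (Nat.le_ceil _)).symm
    · exact hwd _ _ h s hk
  refine ⟨ψ, ?_, ?_, ?_⟩
  · intro u τ hu
    have h1 := hψeq τ ⌈-τ⌉₊ (Nat.le_ceil _)
    have h2 := hψeq (u + τ) ⌈-τ⌉₊ (by linarith [Nat.le_ceil (-τ)])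
    rw [h1, h2]
    have hτk : (0 : ℝ) ≤ τ + ⌈-τ⌉₊ := by linarith [Nat.le_ceil (-τ)]
    rw [show u + τ + (⌈-τ⌉₊ : ℝ) = u + (τ + ⌈-τ⌉₊) by ring,
      hΦ.cocycle u (τ + ⌈-τ⌉₊) hu hτk, hg₁, hg₂,
      show -(⌈-τ⌉₊ : ℝ) + (τ + ⌈-τ⌉₊) = τ by ring]
  · rw [hψeq 0 0 (by norm_num)]
    have h0 : (0 : ℝ) + ((0 : ℕ) : ℝ) = 0 := by norm_num
    rw [h0, hΦ.map_zero]
    exact hz0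
  · intro s
    set k : ℕ := ⌈-s⌉₊ with hkdef
    obtain ⟨hρ, hzk⟩ := hQk k
    set ρ : ℕ → ℕ := (g k).1.1
    have hsk : (0 : ℝ) ≤ s + k := by linarith [Nat.le_ceil (-s)]
    refine mem_omegaLimit_of_seq θ₁ θ₂ Φ D (fun n => t (ρ n) + s) (fun n => x (ρ n))
      (tendsto_atTop_add_const_right atTop s (ht.comp hρ.tendsto_atTop)) ?_ ?_
    · intro n
      rw [hg₁, hg₂, show s + -(t (ρ n) + s) = -t (ρ n) by ring]
      exact hx (ρ n)
    · have hbase : ∀ n, θ₁ (-(t (ρ n) + s)) (θ₁ s ω₁) = θ₁ (-t (ρ n)) ω₁ ∧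
          θ₂ (-(t (ρ n) + s)) (θ₂ s ω₂) = θ₂ (-t (ρ n)) ω₂ := by
        intro n
        rw [hg₁, hg₂, show s + -(t (ρ n) + s) = -t (ρ n) by ring]
        exact ⟨rfl, rfl⟩
      have hev : ∀ᶠ n in atTop,
          Φ (s + k) (θ₁ (-(k : ℝ)) ω₁) (θ₂ (-(k : ℝ)) ω₂)
            (Φ (t (ρ n) - (k : ℝ)) (θ₁ (-t (ρ n)) ω₁) (θ₂ (-t (ρ n)) ω₂) (x (ρ n))) =
          Φ (t (ρ n) + s) (θ₁ (-(t (ρ n) + s)) (θ₁ s ω₁))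
            (θ₂ (-(t (ρ n) + s)) (θ₂ s ω₂)) (x (ρ n)) := by
        have htail : ∀ᶠ n in atTop, (k : ℝ) ≤ t (ρ n) :=
          (ht.comp hρ.tendsto_atTop).eventually_ge_atTop _
        filter_upwards [htail] with n hn
        rw [(hbase n).1, (hbase n).2,
          show t (ρ n) + s = (s + k) + (t (ρ n) - (k : ℝ)) by ring,
          hΦ.cocycle (s + k) (t (ρ n) - (k : ℝ)) hsk (by linarith), hg₁, hg₂,
          show -t (ρ n) + (t (ρ n) - (k : ℝ)) = -(k : ℝ) by ring]
      refine Tendsto.congr' hev ?_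
      rw [hψeq s k (Nat.le_ceil _)]
      exact ((hΦ.continuous (s + k) hsk _ _).tendsto (z k)).comp hzk

end Aux

theorem omegaLimit_quasiInvariant
    {Ω₁ Ω₂ X : Type*} [Nonempty Ω₁]
    [MetricSpace X] [CompleteSpace X] [SecondCountableTopology X]
    [MeasurableSpace X] [BorelSpace X]
    [MeasurableSpace Ω₂] (P : Measure Ω₂) [IsProbabilityMeasure P]
    (θ₁ : ℝ → Ω₁ → Ω₁) (θ₂ : ℝ → Ω₂ → Ω₂)
    (hθ₁ : IsGroupAction θ₁) (hθ₂ : IsGroupAction θ₂)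
    (hθ₂meas : Measurable fun p : ℝ × Ω₂ => θ₂ p.1 p.2)
    (hθ₂pres : ∀ t : ℝ, MeasurePreserving (θ₂ t) P P)
    (Φ : ℝ → Ω₁ → Ω₂ → X → X)
    (hΦ : IsCocycle θ₁ θ₂ Φ)
    (𝒟 : Set (Ω₁ → Ω₂ → Set X))
    (h𝒟ne : FamiliesOfNonemptySets 𝒟)
    (hac : AsymptoticallyCompact θ₁ θ₂ Φ 𝒟) :
    ∀ D ∈ 𝒟, QuasiInvariant θ₁ θ₂ Φ (fun ω₁ ω₂ => omegaLimit θ₁ θ₂ Φ D ω₁ ω₂) := by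
  intro D hD y hy
  have hmain : ∀ (ω₁ : Ω₁) (ω₂ : Ω₂), ∃ ψ₀ : ℝ → X,
      (∀ t τ : ℝ, 0 ≤ t → Φ t (θ₁ τ ω₁) (θ₂ τ ω₂) (ψ₀ τ) = ψ₀ (t + τ)) ∧
      ψ₀ 0 = y ω₁ ω₂ ∧ ∀ s : ℝ, ψ₀ s ∈ omegaLimit θ₁ θ₂ Φ D (θ₁ s ω₁) (θ₂ s ω₂) :=
    fun ω₁ ω₂ => exists_orbit θ₁ θ₂ Φ D hθ₁ hθ₂ hΦ hac hD (hy ω₁ ω₂)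
  choose ψ₀ h1 h2 h3 using hmain
  exact ⟨fun s ω₁ ω₂ => ψ₀ ω₁ ω₂ s, fun t τ ht ω₁ ω₂ => h1 ω₁ ω₂ t τ ht,
    fun ω₁ ω₂ => h2 ω₁ ω₂, fun s ω₁ ω₂ => h3 ω₁ ω₂ s⟩


end RDS
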